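/- Let Γ be a geometric distance-regular graph with respect to a set 𝒞 of Delsarte cliques. Then ψ₁ ≤ τ₂ ≤ −θ_min, and consequently ψ₁² ≤ c₂ ≤ θ_min². -/

import Mathlib

open SimpleGraph Finset Matrix

/-- For a geometric distance-regular graph with respect to a set `𝒞` of
Delsarte cliques (smallest eigenvalue `−m`), one has `ψ₁ ≤ τ₂ ≤ m = −θ_min` and
consequently `ψ₁² ≤ c₂ ≤ m² = θ_min²`. -/
theorem psi_tau_bounds {V : Type*} [Fintype V] [DecidableEq V]
    (G : SimpleGraph V) [DecidableRel G.Adj] (k m ψ₁ τ₂ c₂ : ℕ)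
    (𝒞 : Set (Finset V))
    (hm : 0 < m)
    (hconn : G.Connected)
    (hreg : G.IsRegularOfDegree k)
    -- smallest eigenvalue of G is −m
    (hθeig : ∃ v : V → ℝ, v ≠ 0 ∧ G.adjMatrix ℝ *ᵥ v = (-(m : ℝ)) • v)
    (hθmin : ∀ μ : ℝ, (∃ v : V → ℝ, v ≠ 0 ∧ G.adjMatrix ℝ *ᵥ v = μ • v) → -(m : ℝ) ≤ μ)
    -- 𝒞 is a set of Delsarte cliques: cliques of size 1 − k/θ_min = 1 + k/m
    (hclique : ∀ C ∈ 𝒞, G.IsClique (C : Set V))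
    (hsize : ∀ C ∈ 𝒞, (C.card : ℝ) = 1 + (k : ℝ) / (m : ℝ))
    -- geometric: every edge lies in a unique clique of 𝒞
    (hedge : ∀ x y : V, G.Adj x y → ∃! C, C ∈ 𝒞 ∧ x ∈ C ∧ y ∈ C)
    -- every vertex lies in exactly m = −θ_min cliques of 𝒞
    (hvert : ∀ x : V, {C ∈ 𝒞 | x ∈ C}.ncard = m)
    -- there exist vertices at distance 2
    (hD : ∃ x y : V, G.dist x y = 2)
    -- ψ₁: number of neighbors in a clique of 𝒞 of a vertex at distance 1 from it
    (hψ : ∀ C ∈ 𝒞, ∀ x : V, x ∉ C → (∃ z ∈ C, G.Adj x z) →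
      (C.filter (fun z => G.Adj x z)).card = ψ₁)
    -- τ₂: number of cliques of 𝒞 through x at distance 1 from y, when d(x,y) = 2
    (hτ : ∀ x y : V, G.dist x y = 2 →
      {C | C ∈ 𝒞 ∧ x ∈ C ∧ ∃ z ∈ C, G.Adj y z}.ncard = τ₂)
    -- c₂: number of common neighbors of vertices at distance 2
    (hc : ∀ x y : V, G.dist x y = 2 →
      ((G.neighborFinset x) ∩ (G.neighborFinset y)).card = c₂) :
    ψ₁ ≤ τ₂ ∧ τ₂ ≤ m ∧ ψ₁ ^ 2 ≤ c₂ ∧ c₂ ≤ m ^ 2 := by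
  classical
  obtain ⟨x, y, hd⟩ := hD
  -- basic facts from dist = 2
  have hne : x ≠ y := by
    intro h; subst h; simp [SimpleGraph.dist_self] at hd
  have hnadj : ¬ G.Adj x y := by
    intro h
    have := (SimpleGraph.dist_eq_one_iff_adj (G := G)).mpr h
    omega
  -- a common neighbor z
  obtain ⟨p, hp⟩ := hconn.exists_walk_length_eq_dist x y
  rw [hd] at hp
  obtain ⟨z, hxz, hzy⟩ : ∃ z, G.Adj x z ∧ G.Adj z y := by
    cases p with
    | nil => simp at hp
    | cons h q =>
      cases q with
      | nil => simp at hp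
      | cons h' q' =>
        cases q' with
        | nil => exact ⟨_, h, h'⟩
        | cons h'' q'' => simp [SimpleGraph.Walk.length_cons] at hp
  -- the unique-clique function for edges from x
  set f : V → Finset V := fun w => if h : G.Adj x w then (hedge x w h).choose else ∅ with hf
  have hfspec : ∀ w (h : G.Adj x w), f w ∈ 𝒞 ∧ x ∈ f w ∧ w ∈ f w := by
    intro w h
    simp only [hf, dif_pos h]
    exact (hedge x w h).choose_spec.1
  have hfuniq : ∀ w (h : G.Adj x w), ∀ D, D ∈ 𝒞 → x ∈ D → w ∈ D → D = f w := by
    intro w h D h1 h2 h3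
    simp only [hf, dif_pos h]
    exact (hedge x w h).choose_spec.2 D ⟨h1, h2, h3⟩
  -- the finset of cliques counted by τ₂
  set Tfin : Finset (Finset V) :=
    Finset.univ.filter (fun C : Finset V => C ∈ 𝒞 ∧ x ∈ C ∧ ∃ w ∈ C, G.Adj y w) with hT
  have hTset : {C | C ∈ 𝒞 ∧ x ∈ C ∧ ∃ w ∈ C, G.Adj y w} = ↑Tfin := by
    ext C; simp [hT]
  have hτ2 : Tfin.card = τ₂ := by
    rw [← hτ x y hd, hTset, Set.ncard_coe_finset]
  -- τ₂ ≤ m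
  have hτm : τ₂ ≤ m := by
    rw [← hτ x y hd, ← hvert x]
    exact Set.ncard_le_ncard (fun C hC => ⟨hC.1, hC.2.1⟩) (Set.toFinite _)
  -- c₂ = τ₂ * ψ₁
  set S : Finset V := G.neighborFinset x ∩ G.neighborFinset y with hSdef
  have hmapsto : ∀ w ∈ S, f w ∈ Tfin := by
    intro w hw
    simp only [hSdef, Finset.mem_inter, SimpleGraph.mem_neighborFinset] at hw
    obtain ⟨h1, h2⟩ := hw
    obtain ⟨hc1, hc2, hc3⟩ := hfspec w h1
    simp only [hT, Finset.mem_filter, Finset.mem_univ, true_and]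
    exact ⟨hc1, hc2, w, hc3, h2⟩
  have hyC : ∀ C ∈ Tfin, y ∉ C := by
    intro C hC hyC
    simp only [hT, Finset.mem_filter, Finset.mem_univ, true_and] at hC
    exact hnadj (hclique C hC.1 hC.2.1 hyC hne)
  have hfiber : ∀ C ∈ Tfin, S.filter (fun w => f w = C) = C.filter (fun w => G.Adj y w) := by
    intro C hC
    have hC' := hC
    simp only [hT, Finset.mem_filter, Finset.mem_univ, true_and] at hC'
    ext w
    simp only [Finset.mem_filter, hSdef, Finset.mem_inter, SimpleGraph.mem_neighborFinset]
    constructor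
    · rintro ⟨⟨h1, h2⟩, h3⟩
      exact ⟨h3 ▸ (hfspec w h1).2.2, h2⟩
    · rintro ⟨hwC, hyw⟩
      have hwx : w ≠ x := by rintro rfl; exact hnadj hyw.symm
      have hxw : G.Adj x w := hclique C hC'.1 hC'.2.1 hwC hwx.symm
      exact ⟨⟨hxw, hyw⟩, (hfuniq w hxw C hC'.1 hC'.2.1 hwC).symm⟩
  have hfibercard : ∀ C ∈ Tfin, (S.filter (fun w => f w = C)).card = ψ₁ := by
    intro C hC
    rw [hfiber C hC]
    have hC' := hC
    simp only [hT, Finset.mem_filter, Finset.mem_univ, true_and] at hC'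
    exact hψ C hC'.1 y (hyC C hC) hC'.2.2
  have hc2 : c₂ = τ₂ * ψ₁ := by
    rw [← hc x y hd, ← hSdef, Finset.card_eq_sum_card_fiberwise hmapsto,
      Finset.sum_congr rfl hfibercard, Finset.sum_const, smul_eq_mul, hτ2]
  -- ψ₁ ≤ τ₂
  have hψτ : ψ₁ ≤ τ₂ := by
    obtain ⟨C₀, ⟨hC₀, hyC₀, hzC₀⟩, -⟩ := hedge y z hzy.symm
    have hxC₀ : x ∉ C₀ := fun hx => hnadj (hclique C₀ hC₀ hx hyC₀ hne)
    have hcard : (C₀.filter (fun w => G.Adj x w)).card = ψ₁ :=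
      hψ C₀ hC₀ x hxC₀ ⟨z, hzC₀, hxz⟩
    rw [← hcard, ← hτ2]
    apply Finset.card_le_card_of_injOn f
    · intro w hw
      simp only [Finset.mem_coe, Finset.mem_filter] at hw
      obtain ⟨hwC₀, hxw⟩ := hw
      obtain ⟨hc1, hc2, hc3⟩ := hfspec w hxw
      have hwy : w ≠ y := by rintro rfl; exact hnadj hxw
      have hyw : G.Adj y w := hclique C₀ hC₀ hyC₀ hwC₀ (Ne.symm hwy)
      simp only [Finset.mem_coe, hT, Finset.mem_filter, Finset.mem_univ, true_and]
      exact ⟨hc1, hc2, w, hc3, hyw⟩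
    · intro w hw w' hw' hww'
      simp only [Finset.coe_filter, Set.mem_setOf_eq] at hw hw'
      by_contra hne'
      have hadj : G.Adj w w' := hclique C₀ hC₀ hw.1 hw'.1 hne'
      have h1 : w ∈ f w := (hfspec w hw.2).2.2
      have h2 : w' ∈ f w := hww' ▸ (hfspec w' hw'.2).2.2
      obtain ⟨D, -, huniq⟩ := hedge w w' hadj
      have e1 : C₀ = D := (huniq C₀ ⟨hC₀, hw.1, hw'.1⟩)
      have e2 : f w = D := huniq (f w) ⟨(hfspec w hw.2).1, h1, h2⟩
      exact hxC₀ (e1 ▸ e2 ▸ (hfspec w hw.2).2.1)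
  refine ⟨hψτ, hτm, ?_, ?_⟩
  · rw [hc2, pow_two]; exact Nat.mul_le_mul_right _ hψτ
  · rw [hc2, pow_two]; exact Nat.mul_le_mul hτm (hψτ.trans hτm)
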